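/- arXiv:1903.04696 — 3 statements merged into one kernel-verified Lean document; each statement's English description precedes it below -/
import Mathlib

section
/- Let α, β ∈ Γ with α_k = β_k < ∞ for some k ∈ I. Then there exists γ = (γ_1,…,γ_r) ∈ Γ such that γ_i ≥ min{α_i, β_i} for all i ∈ I, γ_i = min{α_i, β_i} whenever α_i ≠ β_i, and γ_k > α_k = β_k. -/
noncomputable section
open PowerSeries

/-- Coefficient-wise definition of the continuous substitution homomorphism
`X_j ↦ x j` from multivariate power series to power series (each `x j` having
zero constant coefficient). -/
def psiFun {K : Type*} [CommRing K] {n : ℕ} (x : Fin n → PowerSeries K)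
    (F : MvPowerSeries (Fin n) K) : PowerSeries K :=
  PowerSeries.mk fun m =>
    PowerSeries.coeff m (∑ e : Fin n → Fin (m + 1),
      MvPowerSeries.coeff (Finsupp.equivFunOnFinite.symm fun j => (e j : ℕ)) F •
        ∏ j, x j ^ ((e j : ℕ)))

/-- The data of an `n`-space algebroid curve with `r` branches. -/
structure CurveData (K : Type*) [Field K] (r n : ℕ) where
  x : Fin n → Fin r → PowerSeries K
  const_coeff_zero : ∀ j i, PowerSeries.constantCoeff (x j i) = 0
  primes_distinct : ∀ i i' : Fin r, i ≠ i' →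
    {F : MvPowerSeries (Fin n) K | psiFun (fun j => x j i) F = 0} ≠
      {F : MvPowerSeries (Fin n) K | psiFun (fun j => x j i') F = 0}

variable {K : Type*} [Field K] {r n : ℕ}

/-- The substitution homomorphism `ψ` with values in `R = ⊕ K[[t_i]]`. -/
def CurveData.psiP (D : CurveData K r n) (F : MvPowerSeries (Fin n) K) :
    Fin r → PowerSeries K :=
  fun i => psiFun (fun j => D.x j i) F

/-- The local ring `O = Im ψ` of the curve. -/
def CurveData.OP (D : CurveData K r n) : Set (Fin r → PowerSeries K) :=
  Set.range D.psiP

/-- The value vector `v(g) = (v_1(g_1), …, v_r(g_r))` of orders. -/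
def vvP {K : Type*} [Semiring K] {r : ℕ} (g : Fin r → PowerSeries K) : Fin r → ℕ∞ :=
  fun i => (g i).order

/-- The semiring of values `Γ = v(O)` of the curve. -/
def CurveData.GammaP (D : CurveData K r n) : Set (Fin r → ℕ∞) := vvP '' D.OP

/-- `psiFun` is linear in the substituted series. -/
lemma psiFun_add_smul {K : Type*} [CommRing K] {n : ℕ} (x : Fin n → PowerSeries K)
    (F G : MvPowerSeries (Fin n) K) (c : K) :
    psiFun x (F + c • G) = psiFun x F + c • psiFun x G := by
  ext m
  simp only [psiFun, PowerSeries.coeff_mk, map_add, MvPowerSeries.coeff_smul,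
    add_smul, mul_smul, Finset.sum_add_distrib, ← Finset.smul_sum,
    PowerSeries.coeff_smul, smul_eq_mul]

/-- Order of a nonzero scalar multiple. -/
lemma order_smul_of_ne_zero {K : Type*} [Field K] (c : K) (hc : c ≠ 0)
    (φ : PowerSeries K) : (c • φ).order = φ.order := by
  rw [PowerSeries.smul_eq_C_mul, PowerSeries.order_mul]
  have : (PowerSeries.C c).order = 0 := by
    apply le_antisymm _ zero_le
    exact_mod_cast PowerSeries.order_le 0 (by simpa using hc)
  rw [this, zero_add]

/-- Property P.1. If `α, β ∈ Γ` and `α k = β k < ∞` for some `k`,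
then there is `γ ∈ Γ` with `γ i ≥ min (α i) (β i)` for all `i` (with equality whenever
`α i ≠ β i`) and `γ k > α k = β k`. -/
theorem statement1 {K : Type*} [Field K] [IsAlgClosed K] {r n : ℕ} (hr : 1 ≤ r)
    (D : CurveData K r n) (α β : Fin r → ℕ∞) (hα : α ∈ D.GammaP) (hβ : β ∈ D.GammaP)
    (k : Fin r) (heq : α k = β k) (hfin : α k ≠ ⊤) :
    ∃ γ ∈ D.GammaP, (∀ i, min (α i) (β i) ≤ γ i) ∧
      (∀ i, α i ≠ β i → γ i = min (α i) (β i)) ∧ α k < γ k := by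
  obtain ⟨f, ⟨F, rfl⟩, hfv⟩ := hα
  obtain ⟨g, ⟨G, rfl⟩, hgv⟩ := hβ
  -- orders
  have horderf : ∀ i, (D.psiP F i).order = α i := fun i => congrFun hfv i
  have horderg : ∀ i, (D.psiP G i).order = β i := fun i => congrFun hgv i
  obtain ⟨d, hd⟩ : ∃ d : ℕ, α k = (d : ℕ∞) := by
    cases hαk : α k with
    | top => exact absurd hαk hfin
    | coe d => exact ⟨d, rfl⟩
  have hfk : (D.psiP F k).order = (d : ℕ∞) := by rw [horderf, hd]
  have hgk : (D.psiP G k).order = (d : ℕ∞) := by rw [horderg, ← heq, hd]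
  set a : K := PowerSeries.coeff d (D.psiP F k) with ha_def
  set b : K := PowerSeries.coeff d (D.psiP G k) with hb_def
  have ha : a ≠ 0 := (PowerSeries.order_eq_nat.mp hfk).1
  have hb : b ≠ 0 := (PowerSeries.order_eq_nat.mp hgk).1
  set c : K := -(a * b⁻¹) with hc_def
  have hc : c ≠ 0 := by
    simp only [hc_def, neg_ne_zero]
    exact mul_ne_zero ha (inv_ne_zero hb)
  have hcb : a + c * b = 0 := by
    rw [hc_def, neg_mul, inv_mul_cancel_right₀ hb, add_neg_cancel]
  -- the new element
  set H : MvPowerSeries (Fin n) K := F + c • G with hH_def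
  have hpsi : ∀ i, D.psiP H i = D.psiP F i + c • D.psiP G i := fun i =>
    psiFun_add_smul _ F G c
  have hordercg : ∀ i, (c • D.psiP G i).order = β i := fun i => by
    rw [order_smul_of_ne_zero c hc, horderg]
  refine ⟨vvP (D.psiP H), ⟨D.psiP H, ⟨H, rfl⟩, rfl⟩, ?_, ?_, ?_⟩
  · intro i
    have := PowerSeries.min_order_le_order_add (D.psiP F i) (c • D.psiP G i)
    rw [horderf, hordercg] at this
    simpa [vvP, hpsi i] using this
  · intro i hne
    have hne' : (D.psiP F i).order ≠ (c • D.psiP G i).order := by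
      rw [horderf, hordercg]; exact hne
    have := PowerSeries.order_add_of_order_ne (D.psiP F i) (c • D.psiP G i) hne'
    rw [horderf, hordercg] at this
    simpa [vvP, hpsi i] using this
  · -- strict inequality at k
    have hle : ((d + 1 : ℕ) : ℕ∞) ≤ (D.psiP H k).order := by
      apply PowerSeries.nat_le_order
      intro i hi
      rw [hpsi k, map_add, PowerSeries.coeff_smul, smul_eq_mul]
      rcases lt_or_eq_of_le (Nat.lt_succ_iff.mp hi) with hlt | heqd
      · rw [PowerSeries.coeff_of_lt_order i (by rw [hfk]; exact_mod_cast hlt),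
          PowerSeries.coeff_of_lt_order i (by rw [hgk]; exact_mod_cast hlt)]
        ring
      · subst heqd
        rw [← ha_def, ← hb_def]
        exact hcb
    calc α k = (d : ℕ∞) := hd
      _ < ((d + 1 : ℕ) : ℕ∞) := by exact_mod_cast Nat.lt_succ_self d
      _ ≤ (D.psiP H k).order := hle
end
end

section
/- Every fractional ideal I of O admits a Standard Basis: there exist finite sets G ⊆ M∖{0} and H ⊆ I∖{0} such that every nonzero element of I admits a reduction modulo (H,G). -/
noncomputable section
open PowerSeries

variable {K : Type*} [Field K] {r n : ℕ}

/-- The substitution homomorphism `ψ` with values in the total quotient ring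
`⊕ K((t_i))`. -/
def CurveData.psi (D : CurveData K r n) (F : MvPowerSeries (Fin n) K) :
    Fin r → LaurentSeries K :=
  fun i => (psiFun (fun j => D.x j i) F : LaurentSeries K)

/-- The local ring `O` of the curve, viewed inside `⊕ K((t_i))`. -/
def CurveData.O (D : CurveData K r n) : Set (Fin r → LaurentSeries K) :=
  Set.range D.psi

open Classical in
/-- The order valuation on Laurent series, with `v(0) = ∞`. -/
def lOrd {K : Type*} [Field K] (f : LaurentSeries K) : WithTop ℤ :=
  if f = 0 then ⊤ else (f.order : WithTop ℤ)

/-- The value vector `v(h) = (v_1(h_1), …, v_r(h_r))`. -/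
def vv {K : Type*} [Field K] {r : ℕ} (h : Fin r → LaurentSeries K) : Fin r → WithTop ℤ :=
  fun i => lOrd (h i)

/-- The semiring of values `Γ = v(O)`. -/
def CurveData.Gamma (D : CurveData K r n) : Set (Fin r → WithTop ℤ) := vv '' D.O

/-- The maximal ideal `M` of `O` (elements of `O` all of whose components have
positive order). -/
def CurveData.Mset (D : CurveData K r n) : Set (Fin r → LaurentSeries K) :=
  {g | g ∈ D.O ∧ ∀ i, 0 < lOrd (g i)}

/-- `I` is a fractional ideal of `O`: a finitely generated `O`-submodule of
`⊕ K((t_i))` containing an element all of whose components are nonzero. -/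
def CurveData.IsFracIdeal (D : CurveData K r n) (I : Set (Fin r → LaurentSeries K)) : Prop :=
  (∃ B : Finset (Fin r → LaurentSeries K),
    I = {f | ∃ a : (Fin r → LaurentSeries K) → (Fin r → LaurentSeries K),
      (∀ b ∈ B, a b ∈ D.O) ∧ f = ∑ b ∈ B, a b * b}) ∧
  ∃ h ∈ I, ∀ i, h i ≠ 0

/-- A `G`-product `G^α = ∏_{g ∈ G} g^{α_g}`. -/
def Gprod {K : Type*} [Field K] {r : ℕ} (G : Finset (Fin r → LaurentSeries K))
    (α : (Fin r → LaurentSeries K) → ℕ) : Fin r → LaurentSeries K :=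
  ∏ g ∈ G, g ^ α g

/-- `f'` is a `k`-reduction of `f` modulo `(H, G)`. -/
def IsKRed {K : Type*} [Field K] {r : ℕ} (G H : Finset (Fin r → LaurentSeries K)) (k : Fin r)
    (f f' : Fin r → LaurentSeries K) : Prop :=
  lOrd (f k) ≠ ⊤ ∧
  ∃ (c : K) (α : (Fin r → LaurentSeries K) → ℕ) (h : Fin r → LaurentSeries K),
    h ∈ H ∧ f' = f - c • (Gprod G α * h) ∧
    (∀ i, lOrd (f i) ≤ lOrd (f' i)) ∧ lOrd (f k) < lOrd (f' k)

/-- `f'` is a reduction of `f` modulo `(H, G)`. -/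
def IsRed {K : Type*} [Field K] {r : ℕ} (G H : Finset (Fin r → LaurentSeries K))
    (f f' : Fin r → LaurentSeries K) : Prop :=
  ∃ k, IsKRed G H k f f'

/-- `(H, G)` is a Standard Basis for the fractional ideal `I`. -/
def IsSB {K : Type*} [Field K] {r n : ℕ} (D : CurveData K r n)
    (G H : Finset (Fin r → LaurentSeries K)) (I : Set (Fin r → LaurentSeries K)) : Prop :=
  ↑G ⊆ D.Mset \ {0} ∧ ↑H ⊆ I \ {0} ∧
  ∀ f ∈ I, f ≠ 0 → ∃ f', IsRed G H f f'

/-- `G` is a Standard Basis for the local ring `O`. -/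
def IsSBO {K : Type*} [Field K] {r n : ℕ} (D : CurveData K r n)
    (G : Finset (Fin r → LaurentSeries K)) : Prop :=
  IsSB D G {1} D.O

/-- `f` is an `S_k`-process of the pair `(h₁, h₂)` of `H` over `G`. -/
def IsSProc {K : Type*} [Field K] {r : ℕ} (G H : Finset (Fin r → LaurentSeries K)) (k : Fin r)
    (c₁ c₂ : K) (α₁ α₂ : (Fin r → LaurentSeries K) → ℕ)
    (h₁ h₂ f : Fin r → LaurentSeries K) : Prop :=
  h₁ ∈ H ∧ h₂ ∈ H ∧ f = c₁ • (Gprod G α₁ * h₁) + c₂ • (Gprod G α₂ * h₂) ∧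
  min (lOrd ((Gprod G α₁ * h₁) k)) (lOrd ((Gprod G α₂ * h₂) k)) < lOrd (f k)


section Helpers

variable {K : Type*} [Field K]

lemma lOrd_eq_orderTop (f : LaurentSeries K) : lOrd f = f.orderTop := by
  unfold lOrd
  split
  · simp [*]
  · exact (HahnSeries.order_eq_orderTop_of_ne_zero ‹_›)

lemma le_lOrd_iff {f : LaurentSeries K} {d : WithTop ℤ} :
    d ≤ lOrd f ↔ ∀ e : ℤ, (e : WithTop ℤ) < d → f.coeff e = 0 := by
  rw [lOrd_eq_orderTop]
  constructor
  · intro h e he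
    exact HahnSeries.coeff_eq_zero_of_lt_orderTop (lt_of_lt_of_le he h)
  · intro h
    by_contra hlt
    push_neg at hlt
    rcases eq_or_ne f 0 with rfl | hf
    · simp at hlt
    · have h1 : f.orderTop = (f.order : WithTop ℤ) :=
        (HahnSeries.order_eq_orderTop_of_ne_zero hf).symm
      have h2 := HahnSeries.coeff_orderTop_ne h1
      exact h2 (h f.order (by rw [← h1]; exact hlt))

lemma lOrd_smul_le (c : K) (f : LaurentSeries K) : lOrd f ≤ lOrd (c • f) := by
  rw [le_lOrd_iff]
  intro e he
  have : f.coeff e = 0 := le_lOrd_iff.mp le_rfl e he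
  rw [HahnSeries.coeff_smul, this, smul_zero]

lemma lOrd_sub (a b : LaurentSeries K) : min (lOrd a) (lOrd b) ≤ lOrd (a - b) := by
  simpa [lOrd_eq_orderTop] using HahnSeries.min_orderTop_le_orderTop_sub (x := a) (y := b)

lemma lOrd_add (a b : LaurentSeries K) : min (lOrd a) (lOrd b) ≤ lOrd (a + b) := by
  simpa [lOrd_eq_orderTop] using HahnSeries.min_orderTop_le_orderTop_add (x := a) (y := b)

lemma lOrd_mul (a b : LaurentSeries K) : lOrd (a * b) = lOrd a + lOrd b := by
  by_cases ha : a = 0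
  · simp [lOrd, ha]
  by_cases hb : b = 0
  · simp [lOrd, hb]
  have hab : a * b ≠ 0 := mul_ne_zero ha hb
  simp [lOrd, ha, hb, hab, HahnSeries.order_mul ha hb]

lemma lOrd_single {d : ℤ} {c : K} (h : c ≠ 0) : lOrd (HahnSeries.single d c) = d := by
  rw [lOrd_eq_orderTop, HahnSeries.orderTop_single h]

lemma lOrd_coe (p : PowerSeries K) : 0 ≤ lOrd (p : LaurentSeries K) := by
  rw [le_lOrd_iff]
  intro e he
  rw [PowerSeries.coeff_coe]
  rw [if_pos]
  exact_mod_cast he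

lemma inf_le_lOrd_sum {β : Type*} [DecidableEq β] (B : Finset β) (t : β → LaurentSeries K) :
    B.inf (fun b => lOrd (t b)) ≤ lOrd (∑ b ∈ B, t b) := by
  induction B using Finset.cons_induction with
  | empty => simp [lOrd]
  | cons a s ha ih =>
    rw [Finset.inf_cons, Finset.sum_cons]
    exact le_trans (min_le_min le_rfl ih) (lOrd_add _ _)

lemma reduce_step {r : ℕ} {f z : Fin r → LaurentSeries K} {k : Fin r} (hfk : f k ≠ 0)
    (hzk : lOrd (z k) = lOrd (f k)) (hzi : ∀ i, lOrd (f i) ≤ lOrd (z i)) :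
    ∃ c : K, (∀ i, lOrd (f i) ≤ lOrd ((f - c • z) i)) ∧ lOrd (f k) < lOrd ((f - c • z) k) := by
  set d : ℤ := (f k).order with hd
  have hfo : lOrd (f k) = (d : WithTop ℤ) := by simp [lOrd, hfk, hd]
  have hzk0 : z k ≠ 0 := by
    intro h0
    rw [h0] at hzk
    simp [lOrd, hfk] at hzk
  have hzo : lOrd (z k) = (d : WithTop ℤ) := hzk.trans hfo
  have hzcoeff : (z k).coeff d ≠ 0 := by
    apply HahnSeries.coeff_orderTop_ne
    rw [← lOrd_eq_orderTop, hzo]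
  refine ⟨(f k).coeff d / (z k).coeff d, ?_, ?_⟩
  · intro i
    have h1 : lOrd (f i) ≤ lOrd (((f k).coeff d / (z k).coeff d) • z i) :=
      le_trans (hzi i) (lOrd_smul_le _ _)
    have := lOrd_sub (f i) (((f k).coeff d / (z k).coeff d) • z i)
    simp only [Pi.sub_apply, Pi.smul_apply]
    exact le_trans (le_min le_rfl h1) this
  · rw [hfo]
    have hle : ((d + 1 : ℤ) : WithTop ℤ) ≤ lOrd ((f - ((f k).coeff d / (z k).coeff d) • z) k) := by
      rw [le_lOrd_iff]
      intro e he
      have he' : e ≤ d := by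
        have : e < d + 1 := by exact_mod_cast he
        omega
      have hcoeff : ((f - ((f k).coeff d / (z k).coeff d) • z) k).coeff e
          = (f k).coeff e - ((f k).coeff d / (z k).coeff d) * (z k).coeff e := by
        simp [HahnSeries.coeff_sub, HahnSeries.coeff_smul, smul_eq_mul]
      rw [hcoeff]
      rcases lt_or_eq_of_le he' with h | h
      · have h1 : (f k).coeff e = 0 := by
          apply HahnSeries.coeff_eq_zero_of_lt_orderTop
          rw [← lOrd_eq_orderTop, hfo]; exact_mod_cast h
        have h2 : (z k).coeff e = 0 := by
          apply HahnSeries.coeff_eq_zero_of_lt_orderTop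
          rw [← lOrd_eq_orderTop, hzo]; exact_mod_cast h
        rw [h1, h2, mul_zero, sub_zero]
      · subst h
        rw [div_mul_cancel₀ _ hzcoeff, sub_self]
    calc (d : WithTop ℤ) < ((d + 1 : ℤ) : WithTop ℤ) := by exact_mod_cast lt_add_one d
      _ ≤ _ := hle

end Helpers

/-- Theorem 3.5: existence of Standard Bases. Every fractional
ideal `I` of the local ring `O` of an algebroid curve admits a Standard Basis:
finite sets `G ⊆ M \ {0}` and `H ⊆ I \ {0}` such that every nonzero element of
`I` admits a reduction modulo `(H, G)`. -/
theorem statement6 {K : Type*} [Field K] [IsAlgClosed K] {r n : ℕ} (hr : 1 ≤ r)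
    (D : CurveData K r n) (σc : Fin r → ℕ)
    (hσc : ∀ h : Fin r → LaurentSeries K,
      (∀ i, ((σc i : ℤ) : WithTop ℤ) ≤ lOrd (h i)) → h ∈ D.O)
    (I : Set (Fin r → LaurentSeries K)) (hI : D.IsFracIdeal I) :
    ∃ G H : Finset (Fin r → LaurentSeries K), IsSB D G H I := by
  classical
  obtain ⟨⟨B, hB⟩, f0, hf0I, hf0⟩ := hI
  have hOnn : ∀ g ∈ D.O, ∀ i, 0 ≤ lOrd (g i) := by
    rintro g ⟨F, rfl⟩ i
    exact lOrd_coe _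
  set γ : Fin r → ℤ := fun i => (f0 i).order + σc i with hγ
  -- the conductor of the fractional ideal I
  have hcond : ∀ w : Fin r → LaurentSeries K,
      (∀ i, ((γ i : ℤ) : WithTop ℤ) ≤ lOrd (w i)) → w ∈ I := by
    intro w hw
    rw [hB] at hf0I ⊢
    obtain ⟨a0, ha0, hsum⟩ := hf0I
    set q : Fin r → LaurentSeries K := fun i => w i * (f0 i)⁻¹ with hq
    have hqf0 : ∀ i, q i * f0 i = w i := fun i => inv_mul_cancel_right₀ (hf0 i) (w i)
    have hqord : ∀ i, ((σc i : ℤ) : WithTop ℤ) ≤ lOrd (q i) := by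
      intro i
      by_cases hwi : w i = 0
      · have : q i = 0 := by simp [hq, hwi]
        simp [this, lOrd]
      · have hf0o : lOrd (f0 i) = ((f0 i).order : WithTop ℤ) := by simp [lOrd, hf0 i]
        have hne : lOrd (q i) + ((f0 i).order : WithTop ℤ) = lOrd (w i) := by
          rw [← hf0o, ← lOrd_mul, hqf0]
        have key : ((σc i : ℤ) : WithTop ℤ) + ((f0 i).order : WithTop ℤ)
            ≤ lOrd (q i) + ((f0 i).order : WithTop ℤ) := by
          rw [hne]
          refine le_trans (le_of_eq ?_) (hw i)
          rw [hγ]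
          push_cast
          exact add_comm _ _
        exact (WithTop.add_le_add_iff_right (WithTop.coe_ne_top)).mp key
    refine ⟨fun b => q * a0 b, ?_, ?_⟩
    · intro b hb
      apply hσc
      intro i
      have h1 : ((σc i : ℤ) : WithTop ℤ) ≤ lOrd (q i) + lOrd (a0 b i) :=
        le_trans (hqord i) (le_add_of_nonneg_right (hOnn _ (ha0 b hb) i))
      simpa [Pi.mul_apply, lOrd_mul] using h1
    · have hdist : ∑ b ∈ B, (q * a0 b) * b = q * ∑ b ∈ B, a0 b * b := by
        rw [Finset.mul_sum]
        exact Finset.sum_congr rfl (fun b _ => by ring)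
      rw [hdist, ← hsum]
      funext i
      exact (hqf0 i).symm
  -- uniform lower bound on orders of elements of I
  set mB : Fin r → WithTop ℤ := fun i => B.inf (fun b => lOrd (b i)) with hmB
  have hlow : ∀ f ∈ I, ∀ i, mB i ≤ lOrd (f i) := by
    intro f hf i
    rw [hB] at hf
    obtain ⟨a, ha, rfl⟩ := hf
    have h1 : (∑ b ∈ B, a b * b) i = ∑ b ∈ B, (a b i * b i) := by
      simp [Finset.sum_apply]
    rw [h1]
    refine le_trans ?_ (inf_le_lOrd_sum B _)
    apply Finset.inf_mono_fun
    intro b hb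
    rw [lOrd_mul]
    exact le_add_of_nonneg_left (hOnn _ (ha b hb) i)
  -- building blocks
  set bk : Fin r → ℕ := fun k => max (σc k) 1 with hbk
  set eF : Fin r → (Fin r → LaurentSeries K) :=
    fun k i => if i = k then HahnSeries.single ((bk k : ℤ)) 1 else 0 with heF
  set dl : Fin r → ℕ → (Fin r → LaurentSeries K) :=
    fun k s i => if i = k then HahnSeries.single ((γ k + s : ℤ)) 1 else 0 with hdl
  set G : Finset (Fin r → LaurentSeries K) := Finset.image eF Finset.univ with hG
  have heFG : ∀ k, eF k ∈ G := fun k => Finset.mem_image.mpr ⟨k, Finset.mem_univ k, rfl⟩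
  have heFkk : ∀ k, eF k k = HahnSeries.single ((bk k : ℤ)) 1 := by
    intro k; rw [heF]; simp
  have heFne : ∀ k i, i ≠ k → eF k i = 0 := by
    intro k i h; rw [heF]; simp [h]
  have hdlkk : ∀ k s, dl k s k = HahnSeries.single ((γ k + s : ℤ)) 1 := by
    intro k s; rw [hdl]; simp
  have hdlne : ∀ k s i, i ≠ k → dl k s i = 0 := by
    intro k s i h; rw [hdl]; simp [h]
  have heFM : ∀ k, eF k ∈ D.Mset \ {0} := by
    intro k
    constructor
    · constructor
      · apply hσc
        intro i
        by_cases hik : i = k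
        · subst hik
          rw [heFkk, lOrd_single one_ne_zero]
          exact_mod_cast (le_max_left (σc i) 1)
        · rw [heFne _ _ hik]; simp [lOrd]
      · intro i
        by_cases hik : i = k
        · subst hik
          rw [heFkk, lOrd_single one_ne_zero]
          have h0 : 0 < bk i := by
            rw [hbk]
            exact Nat.lt_of_lt_of_le Nat.zero_lt_one (le_max_right _ _)
          exact_mod_cast h0
        · rw [heFne _ _ hik]; simp [lOrd]
    · intro h0
      have := congrFun h0 k
      rw [heFkk] at this
      exact HahnSeries.single_ne_zero one_ne_zero this
  have hdlI : ∀ k s, dl k s ∈ I := by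
    intro k s
    apply hcond
    intro i
    by_cases hik : i = k
    · subst hik
      rw [hdlkk, lOrd_single one_ne_zero]
      exact_mod_cast (by omega : γ i ≤ γ i + (s:ℤ))
    · rw [hdlne _ _ _ hik]; simp [lOrd]
  have hdl0 : ∀ k s, dl k s ≠ 0 := by
    intro k s h0
    have := congrFun h0 k
    rw [hdlkk] at this
    exact HahnSeries.single_ne_zero one_ne_zero this
  -- the finite set of small values
  set V : Set (Fin r → WithTop ℤ) :=
    {w | (∃ h, h ∈ I ∧ h ≠ 0 ∧ vv h = w) ∧
      ∀ i, w i < ((γ i : ℤ) : WithTop ℤ) ∨ w i = ⊤} with hV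
  have hVfin : V.Finite := by
    have hS : ∀ i, {u : WithTop ℤ |
        mB i ≤ u ∧ (u < ((γ i : ℤ) : WithTop ℤ) ∨ u = ⊤)}.Finite := by
      intro i
      by_cases hmi : mB i = ⊤
      · apply Set.Finite.subset (Set.finite_singleton (⊤ : WithTop ℤ))
        rintro u ⟨h1, _⟩
        rw [hmi] at h1
        simp [top_le_iff.mp h1]
      · obtain ⟨a, ha⟩ := WithTop.ne_top_iff_exists.mp hmi
        apply Set.Finite.subset (Set.Finite.insert (⊤ : WithTop ℤ)
          (Set.Finite.image (fun z : ℤ => (z : WithTop ℤ)) (Set.finite_Icc a (γ i))))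
        rintro u ⟨h1, h2⟩
        rcases h2 with h2 | h2
        · right
          have hu : u ≠ ⊤ := ne_top_of_lt h2
          obtain ⟨zu, hzu⟩ := WithTop.ne_top_iff_exists.mp hu
          refine ⟨zu, ?_, hzu⟩
          constructor
          · rw [← ha, ← hzu] at h1
            exact_mod_cast h1
          · rw [← hzu] at h2
            exact_mod_cast le_of_lt h2
        · left; exact h2
    have hpi := Set.Finite.pi' hS
    apply hpi.subset
    rintro w ⟨⟨h, hhI, hh0, rfl⟩, hbox⟩
    intro i
    exact ⟨hlow h hhI i, hbox i⟩
  set pick : (Fin r → WithTop ℤ) → (Fin r → LaurentSeries K) :=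
    fun w => if hw : ∃ h, h ∈ I ∧ h ≠ 0 ∧ vv h = w then hw.choose else 0 with hpick
  have hpickV : ∀ w ∈ V, pick w ∈ I ∧ pick w ≠ 0 ∧ vv (pick w) = w := by
    intro w hw
    obtain ⟨hex, _⟩ := hw
    rw [hpick]
    simp only [dif_pos hex]
    exact hex.choose_spec
  set H1 : Finset (Fin r → LaurentSeries K) := Finset.image pick hVfin.toFinset with hH1
  set H2 : Finset (Fin r → LaurentSeries K) :=
    Finset.univ.biUnion (fun k : Fin r => (Finset.range (bk k)).image (dl k)) with hH2
  refine ⟨G, H1 ∪ H2, ?_, ?_, ?_⟩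
  · intro g hg
    rw [hG] at hg
    simp only [Finset.coe_image, Set.mem_image] at hg
    obtain ⟨k, _, rfl⟩ := hg
    exact heFM k
  · intro h hh
    simp only [Finset.coe_union, Set.mem_union] at hh
    rcases hh with hh | hh
    · rw [hH1] at hh
      simp only [Finset.coe_image, Set.mem_image] at hh
      obtain ⟨w, hw, rfl⟩ := hh
      rw [Finset.mem_coe, Set.Finite.mem_toFinset] at hw
      obtain ⟨h1, h2, _⟩ := hpickV w hw
      exact ⟨h1, h2⟩
    · rw [hH2] at hh
      simp only [Finset.coe_biUnion, Set.mem_iUnion] at hh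
      obtain ⟨k, _, hh⟩ := hh
      rw [Finset.coe_image, Set.mem_image] at hh
      obtain ⟨s, _, rfl⟩ := hh
      exact ⟨hdlI k s, hdl0 k s⟩
  -- the reduction property
  intro f hfI hf0'
  have hex : ∃ k, f k ≠ 0 := Function.ne_iff.mp hf0'
  by_cases hA : ∃ k, f k ≠ 0 ∧ ((γ k : ℤ) : WithTop ℤ) ≤ lOrd (f k)
  · -- Case A: some component has large order; reduce using dl and powers of eF
    obtain ⟨k, hk, hdγ⟩ := hA
    set d : ℤ := (f k).order with hd
    have hfo : lOrd (f k) = (d : WithTop ℤ) := by simp [lOrd, hk, hd]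
    have hγd : γ k ≤ d := by
      rw [hfo] at hdγ
      exact_mod_cast hdγ
    have hbpos : (0:ℤ) < (bk k : ℤ) := by
      have := le_max_right (σc k) 1
      rw [hbk]
      exact_mod_cast (by omega : 0 < max (σc k) 1)
    set sZ : ℤ := (d - γ k) % (bk k : ℤ) with hsZdef
    set qZ : ℤ := (d - γ k) / (bk k : ℤ) with hqZdef
    have hs0 : 0 ≤ sZ := Int.emod_nonneg _ (ne_of_gt hbpos)
    have hslt : sZ < (bk k : ℤ) := Int.emod_lt_of_pos _ hbpos
    have hq0 : 0 ≤ qZ := Int.ediv_nonneg (by omega) (le_of_lt hbpos)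
    have hdecomp : (bk k : ℤ) * qZ + sZ = d - γ k := Int.mul_ediv_add_emod _ _
    clear_value sZ qZ
    set m : ℕ := qZ.toNat with hm
    set sN : ℕ := sZ.toNat with hsN
    have hmZ : (m : ℤ) = qZ := Int.toNat_of_nonneg hq0
    have hsZ : (sN : ℤ) = sZ := Int.toNat_of_nonneg hs0
    have hsmem : sN < bk k := by omega
    have hhH : dl k sN ∈ H1 ∪ H2 := by
      apply Finset.mem_union_right
      rw [hH2]
      apply Finset.mem_biUnion.mpr
      exact ⟨k, Finset.mem_univ k, Finset.mem_image.mpr ⟨sN, Finset.mem_range.mpr hsmem, rfl⟩⟩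
    set α : (Fin r → LaurentSeries K) → ℕ := fun g => if g = eF k then m else 0 with hα
    have hGp : Gprod G α = eF k ^ m := by
      rw [Gprod]
      rw [Finset.prod_eq_single_of_mem (eF k) (heFG k)
        (fun g _ hne => by rw [hα]; simp [hne])]
      rw [hα]; simp
    have hzi : ∀ i, i ≠ k → (Gprod G α * dl k sN) i = 0 := by
      intro i hi
      have : dl k sN i = 0 := hdlne _ _ _ hi
      simp [Pi.mul_apply, this]
    have hzk : (Gprod G α * dl k sN) k = HahnSeries.single d 1 := by
      rw [Pi.mul_apply, hGp, Pi.pow_apply]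
      have harg : m • ((bk k : ℤ)) + (γ k + (sN : ℤ)) = d := by
        have hms : m • (bk k : ℤ) = (m : ℤ) * (bk k : ℤ) := by
          simp [nsmul_eq_mul]
        rw [hms, hmZ, hsZ, mul_comm]
        linarith [hdecomp]
      rw [heFkk, hdlkk, HahnSeries.single_pow, HahnSeries.single_mul_single, one_pow, one_mul,
        harg]
    obtain ⟨c, hc1, hc2⟩ := reduce_step (z := Gprod G α * dl k sN) hk
      (by rw [hzk, lOrd_single one_ne_zero, hfo])
      (by
        intro i
        by_cases hik : i = k
        · subst hik
          rw [hzk, lOrd_single one_ne_zero, hfo]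
        · rw [hzi i hik]
          simp [lOrd])
    refine ⟨f - c • (Gprod G α * dl k sN), k, ?_, c, α, dl k sN, hhH, rfl, hc1, hc2⟩
    rw [hfo]
    exact WithTop.coe_ne_top
  · -- Case B: all components have small order; f has a representative in H1
    push_neg at hA
    have hVmem : vv f ∈ V := by
      refine ⟨⟨f, hfI, hf0', rfl⟩, ?_⟩
      intro i
      by_cases hfi : f i = 0
      · right; simp [vv, lOrd, hfi]
      · left
        have := hA i hfi
        simpa [vv] using this
    obtain ⟨hpI, hp0, hpv⟩ := hpickV _ hVmem
    have hhH : pick (vv f) ∈ H1 ∪ H2 := by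
      apply Finset.mem_union_left
      rw [hH1]
      exact Finset.mem_image.mpr ⟨vv f, hVfin.mem_toFinset.mpr hVmem, rfl⟩
    obtain ⟨k, hk⟩ := hex
    have hGp : Gprod G (fun _ => 0) * pick (vv f) = pick (vv f) := by
      rw [Gprod]
      simp
    obtain ⟨c, hc1, hc2⟩ := reduce_step (z := Gprod G (fun _ => 0) * pick (vv f)) hk
      (by rw [hGp]; exact congrFun hpv k)
      (by intro i; rw [hGp]; exact le_of_eq (congrFun hpv i).symm)
    refine ⟨f - c • (Gprod G (fun _ => 0) * pick (vv f)), k, ?_, c, fun _ => 0,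
      pick (vv f), hhH, rfl, hc1, hc2⟩
    simp [lOrd, hk]
end
end

section
/- Let G ⊆ M∖{0} be a finite set, I a fractional ideal of O, k ∈ I, and T^k = {h ∈ I : v_j(h) = ∞ for all j ∈ I∖{k}}. Let B_k ⊆ T^k∖{0} be a finite set such that for every nonzero u ∈ T^k there exist a G-product G^α and h ∈ B_k with v_k(u) = v_k(G^α·h), and let κ_k ∈ ℕ satisfy κ_k + m ∈ {v_k(u) : 0 ≠ u ∈ T^k} for every m ∈ ℕ. Then every f ∈ I with κ_k ≤ v_k(f) < ∞ admits a k-reduction modulo (B_k, G). -/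
noncomputable section
open PowerSeries

variable {K : Type*} [Field K] {r n : ℕ}

lemma lOrd_eq_top_iff {K : Type*} [Field K] (f : LaurentSeries K) :
    lOrd f = ⊤ ↔ f = 0 := by
  unfold lOrd; split <;> simp_all

lemma lOrd_of_ne {K : Type*} [Field K] {f : LaurentSeries K} (hf : f ≠ 0) :
    lOrd f = (f.order : WithTop ℤ) := by unfold lOrd; simp [hf]

lemma exists_cancel {K : Type*} [Field K] {f g : LaurentSeries K}
    (hf : f ≠ 0) (hg : g ≠ 0) (h : lOrd f = lOrd g) :
    ∃ c : K, lOrd f < lOrd (f - c • g) := by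
  have hord : f.order = g.order := by
    rw [lOrd_of_ne hf, lOrd_of_ne hg] at h
    exact_mod_cast h
  refine ⟨f.coeff f.order / g.coeff f.order, ?_⟩
  have hcoeff : ∀ i ≤ f.order,
      (f - (f.coeff f.order / g.coeff f.order) • g).coeff i = 0 := by
    intro i hi
    rcases lt_or_eq_of_le hi with hi | hi
    · have h1 : f.coeff i = 0 := HahnSeries.coeff_eq_zero_of_lt_order hi
      have h2 : g.coeff i = 0 := HahnSeries.coeff_eq_zero_of_lt_order (hord ▸ hi)
      simp [HahnSeries.coeff_sub, h1, h2]
    · have h2 : g.coeff f.order ≠ 0 := hord ▸ (mt HahnSeries.coeff_order_eq_zero.1 hg)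
      rw [hi]
      rw [HahnSeries.coeff_sub, HahnSeries.coeff_smul, smul_eq_mul, div_mul_cancel₀ _ h2, sub_self]
  by_cases h0 : f - (f.coeff f.order / g.coeff f.order) • g = 0
  · rw [h0, lOrd_of_ne hf]
    simp [lOrd]
  · rw [lOrd_of_ne hf, lOrd_of_ne h0]
    have : f.order < (f - (f.coeff f.order / g.coeff f.order) • g).order := by
      by_contra hle
      push_neg at hle
      exact (mt HahnSeries.coeff_order_eq_zero.1 h0) (hcoeff _ hle)
    exact_mod_cast this

/-- Let `G ⊆ M \ {0}` be finite, `I` a fractional ideal of `O`,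
`k ∈ I`, and `T^k = {h ∈ I : v_j(h) = ∞ for all j ≠ k}`. Let `B_k ⊆ T^k \ {0}`
be a finite set such that the value `v_k` of every nonzero `u ∈ T^k` is realized
by some `G^α h` with `h ∈ B_k`, and let `κ_k ∈ ℕ` be such that
`κ_k + ℕ ⊆ v_k(T^k \ {0})`. Then every `f ∈ I` with `κ_k ≤ v_k(f) < ∞` admits a
`k`-reduction modulo `(B_k, G)`. -/
theorem statement14 {K : Type*} [Field K] [IsAlgClosed K] {r n : ℕ} (hr : 1 ≤ r)
    (D : CurveData K r n) (G : Finset (Fin r → LaurentSeries K))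
    (hG : ↑G ⊆ D.Mset \ {0})
    (I : Set (Fin r → LaurentSeries K)) (hI : D.IsFracIdeal I)
    (k : Fin r) (B : Finset (Fin r → LaurentSeries K))
    (hB : ↑B ⊆ {h | h ∈ I ∧ ∀ j, j ≠ k → lOrd (h j) = ⊤} \ {0})
    (hBgen : ∀ u ∈ I, (∀ j, j ≠ k → lOrd (u j) = ⊤) → u ≠ 0 →
      ∃ (α : (Fin r → LaurentSeries K) → ℕ), ∃ h ∈ B,
        lOrd (u k) = lOrd ((Gprod G α * h) k))
    (κ : ℕ)
    (hκ : ∀ m : ℕ, ∃ u ∈ I, (∀ j, j ≠ k → lOrd (u j) = ⊤) ∧ u ≠ 0 ∧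
      lOrd (u k) = (((κ + m : ℕ) : ℤ) : WithTop ℤ))
    (f : Fin r → LaurentSeries K) (hf : f ∈ I)
    (hfk : ((κ : ℤ) : WithTop ℤ) ≤ lOrd (f k)) (hfk' : lOrd (f k) ≠ ⊤) :
    ∃ f', IsKRed G B k f f' := by
  
  have hfk0 : f k ≠ 0 := fun h0 => hfk' ((lOrd_eq_top_iff _).2 h0)
  have hordeq : lOrd (f k) = ((f k).order : WithTop ℤ) := lOrd_of_ne hfk0
  have hκo : (κ : ℤ) ≤ (f k).order := by
    rw [hordeq] at hfk; exact_mod_cast hfk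
  obtain ⟨u, huI, huj, hu0, huord⟩ := hκ ((f k).order - κ).toNat
  have hmo : ((κ + ((f k).order - κ).toNat : ℕ) : ℤ) = (f k).order := by
    have h1 : (((f k).order - κ).toNat : ℤ) = (f k).order - κ :=
      Int.toNat_of_nonneg (by omega)
    push_cast [h1]; omega
  obtain ⟨α, h, hhB, hvk⟩ := hBgen u huI huj hu0
  have hgk : lOrd ((Gprod G α * h) k) = lOrd (f k) := by
    rw [← hvk, huord, hordeq]
    exact_mod_cast congrArg (fun z : ℤ => (z : WithTop ℤ)) hmo
  have hgk0 : (Gprod G α * h) k ≠ 0 := by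
    intro h0
    rw [(lOrd_eq_top_iff _).2 h0] at hgk
    exact hfk' hgk.symm
  obtain ⟨c, hc⟩ := exists_cancel hfk0 hgk0 hgk.symm
  refine ⟨f - c • (Gprod G α * h), hfk', c, α, h, hhB, rfl, ?_, ?_⟩
  · intro i
    by_cases hik : i = k
    · subst hik
      exact le_of_lt (by simpa using hc)
    · have hmem := hB (Finset.mem_coe.2 hhB)
      have hj : h i = 0 := (lOrd_eq_top_iff _).1 (hmem.1.2 i hik)
      simp [Pi.sub_apply, Pi.smul_apply, Pi.mul_apply, hj]
  · simpa using hc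
end
end
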